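/- arXiv:2403.04519 — 2 statements merged into one kernel-verified Lean document; each statement's English description precedes it below -/
import Mathlib

section
/- At the smaller positive root x₁ of h (when two distinct positive roots exist), the Jacobian determinant of the system at (x₁, qx₁) is negative, so (x₁, qx₁) is a saddle; at the larger root x₂ it is positive. -/
theorem stmt13 (m q B e x₁ x₂ : ℝ) (hm : 0 < m) (hq : 0 < q) (hB : 0 < B)
    (heB : e > B) (hBm : B * m > q + 1)
    (he : e < B + (1 + q - B * m) ^ 2 / (4 * m * (1 + q)))
    (hx₁ : 0 < x₁) (hlt : x₁ < x₂)
    (h₁ : m * (1 + q) * x₁ ^ 2 + (1 + q - B * m) * x₁ + (e - B) = 0)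
    (h₂ : m * (1 + q) * x₂ ^ 2 + (1 + q - B * m) * x₂ + (e - B) = 0) :
    3 * m * (1 + q) * x₁ ^ 2 + 2 * (1 + q - B * m) * x₁ + (e - B) < 0 ∧
    3 * m * (1 + q) * x₂ ^ 2 + 2 * (1 + q - B * m) * x₂ + (e - B) > 0 := by
  have hne : x₂ - x₁ > 0 := by linarith
  have hsum : m * (1 + q) * (x₁ + x₂) = -(1 + q - B * m) := by
    have hd : (x₂ - x₁) * (m * (1 + q) * (x₁ + x₂) + (1 + q - B * m)) = 0 := by ring_nf; nlinarith [h₁, h₂]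
    rcases mul_eq_zero.mp hd with h | h
    · linarith
    · linarith
  have hx₂ : 0 < x₂ := lt_trans hx₁ hlt
  have ha : 0 < m * (1 + q) := by positivity
  constructor
  · nlinarith [mul_pos hx₁ hne, mul_pos (mul_pos hx₁ hne) ha]
  · nlinarith [mul_pos hx₂ hne, mul_pos (mul_pos hx₂ hne) ha]
end

section
/- For the system x' = x(1+mx)(B−x−y)−ex, y' = qx−y with Dulac function D(x,y) = 1/(xy), the divergence ∂(DP)/∂x + ∂(DQ)/∂y equals (−my² + (mB−1−2mx)y − q)/y², which is negative for all x > 0, y > 0 provided mB < 1 and q > 0, m > 0. -/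
theorem stmt14 (m q B e : ℝ) (hm : 0 < m) (hq : 0 < q) (hB : 0 < B)
    (hmB : m * B < 1) :
    let P : ℝ → ℝ → ℝ := fun x y => x * (1 + m * x) * (B - x - y) - e * x
    let Q : ℝ → ℝ → ℝ := fun x y => q * x - y
    let D : ℝ → ℝ → ℝ := fun x y => 1 / (x * y)
    ∀ x y : ℝ, 0 < x → 0 < y →
      deriv (fun u => D u y * P u y) x + deriv (fun v => D x v * Q x v) y =
        (-m * y ^ 2 + (m * B - 1 - 2 * m * x) * y - q) / y ^ 2 ∧
      (-m * y ^ 2 + (m * B - 1 - 2 * m * x) * y - q) / y ^ 2 < 0 := by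
  intro P Q D x y hx hy
  have hy0 : y ≠ 0 := ne_of_gt hy
  have hx0 : x ≠ 0 := ne_of_gt hx
  constructor
  · have h1 : deriv (fun u => D u y * P u y) x =
        (m * (B - x - y) - (1 + m * x)) / y := by
      have heq : (fun u => D u y * P u y) =ᶠ[nhds x]
          (fun u => ((1 + m * u) * (B - u - y) - e) / y) := by
        filter_upwards [eventually_gt_nhds hx] with u hu
        have hu0 : u ≠ 0 := ne_of_gt hu
        simp only [P, D]
        field_simp
      rw [heq.deriv_eq]
      have hd : HasDerivAt (fun u => ((1 + m * u) * (B - u - y) - e) / y)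
          ((m * (B - x - y) + (1 + m * x) * (-1)) / y) x := by
        have : HasDerivAt (fun u => (1 + m * u) * (B - u - y) - e)
            (m * (B - x - y) + (1 + m * x) * (-1)) x := by
          have ha : HasDerivAt (fun u : ℝ => 1 + m * u) m x := by
            simpa using ((hasDerivAt_id x).const_mul m).const_add 1
          have hb : HasDerivAt (fun u : ℝ => B - u - y) (-1) x := by
            simpa using (((hasDerivAt_id x).const_sub B).sub_const y).neg.neg
          simpa using (ha.mul hb).sub_const e
        exact this.div_const y
      rw [hd.deriv]; ring
    have h2 : deriv (fun v => D x v * Q x v) y = -q / y ^ 2 := by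
      have heq : (fun v => D x v * Q x v) =ᶠ[nhds y]
          (fun v => q / v - 1 / x) := by
        filter_upwards [eventually_gt_nhds hy] with v hv
        have hv0 : v ≠ 0 := ne_of_gt hv
        simp only [Q, D]
        rw [div_sub_div _ _ hv0 hx0, one_div, inv_mul_eq_div, mul_comm x v]
        ring_nf
      rw [heq.deriv_eq]
      have hd : HasDerivAt (fun v : ℝ => q / v - 1 / x) (-(q / y ^ 2)) y := by
        have h := ((hasDerivAt_inv hy0).const_mul q).sub_const (1 / x)
        have e1 : (fun v : ℝ => q / v - 1 / x) = fun v => q * v⁻¹ - 1 / x := by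
          funext v; ring
        have e2 : -(q / y ^ 2) = q * -(y ^ 2)⁻¹ := by ring
        rw [e1, e2]; exact h
      rw [hd.deriv]; ring
    rw [h1, h2]
    field_simp
    ring
  · apply div_neg_of_neg_of_pos
    · nlinarith [mul_pos hm (mul_pos hx hy), mul_pos hm (mul_pos hy hy)]
    · positivity
end
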